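/- (Existence from an approximate solution.) Let m_j = β_j·X^{q_j} (with β_j ∈ ℂ, β_j ≠ 0), for 1 ≤ j < p, be monomials such that for each j either m_j = 1 or q_j ≥ μ, and q_j < 2μ for all j. Suppose there exists a tuple (w₁,…,w_p) in ℂ[[X]] with w_p = 0 such that each w_j has leading term m_j, and such that ord(E_j(w)) ≥ Q for all 1 ≤ j < p, for some integer Q > 2·max_j q_j. Then there exists a (necessarily unique) solution (u₁,…,u_p) of the escape-region equations such that, for each 1 ≤ j < p, u_j has leading term m_j. -/

import Mathlib

/-- `f` has leading term (leading monomial) `β·X^q`: the coefficient of `X^q` is `β ≠ 0`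
and all lower coefficients vanish. -/
def HasLeadingTerm (f : PowerSeries ℂ) (β : ℂ) (q : ℕ) : Prop :=
  β ≠ 0 ∧ PowerSeries.coeff q f = β ∧ ∀ n < q, PowerSeries.coeff n f = 0

/-- `(u 1, …, u p)` is a solution of the escape-region equations of period `p`
(where `X` plays the role of `𝔱^{1/μ}`, i.e. of `ξ^{1/μ}` with `ξ = 1/(3a)`):
`u p = 0` and `X^{2μ}(u_{j+1} − u₁) = u_j²(u_j − 1)` for `1 ≤ j < p`. -/
def IsEscapeSolution (p μ : ℕ) (u : ℕ → PowerSeries ℂ) : Prop :=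
  u p = 0 ∧ ∀ j, 1 ≤ j → j < p →
    (PowerSeries.X : PowerSeries ℂ) ^ (2 * μ) * (u (j + 1) - u 1)
      = (u j) ^ 2 * (u j - 1)

/-- The error `E_j(w) = X^{2μ}(w_{j+1} − w₁) − w_j²(w_j − 1)`. -/
noncomputable def Err (μ : ℕ) (w : ℕ → PowerSeries ℂ) (j : ℕ) : PowerSeries ℂ :=
  (PowerSeries.X : PowerSeries ℂ) ^ (2 * μ) * (w (j + 1) - w 1) - (w j) ^ 2 * (w j - 1)

open PowerSeries

private lemma coeff_mul_lowzero {f g : PowerSeries ℂ} {r s N : ℕ}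
    (hf : ∀ a < r, PowerSeries.coeff a f = 0) (hg : ∀ b < s, PowerSeries.coeff b g = 0)
    (h : N < r + s) : PowerSeries.coeff N (f * g) = 0 := by
  rw [PowerSeries.coeff_mul]
  refine Finset.sum_eq_zero fun x hx => ?_
  rw [Finset.HasAntidiagonal.mem_antidiagonal] at hx
  rcases lt_or_ge x.1 r with h1 | h1
  · rw [hf _ h1, zero_mul]
  · rw [hg _ (by omega), mul_zero]

private lemma coeff_mul_single {f g : PowerSeries ℂ} {r s : ℕ}
    (hf : ∀ a < r, PowerSeries.coeff a f = 0) (hg : ∀ b < s, PowerSeries.coeff b g = 0) :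
    PowerSeries.coeff (r + s) (f * g) = PowerSeries.coeff r f * PowerSeries.coeff s g := by
  rw [PowerSeries.coeff_mul]
  apply Finset.sum_eq_single (r, s)
  · intro b hb hne
    rw [Finset.HasAntidiagonal.mem_antidiagonal] at hb
    rcases lt_or_ge b.1 r with h1 | h1
    · rw [hf _ h1, zero_mul]
    · by_cases h2 : b.1 = r
      · exact absurd (Prod.ext h2 (by omega)) hne
      · rw [hg _ (by omega), mul_zero]
  · intro h; exact absurd (Finset.HasAntidiagonal.mem_antidiagonal.2 (by simp)) h

private lemma coeff_f_mul_CX (f : PowerSeries ℂ) (d : ℂ) (m n : ℕ) :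
    PowerSeries.coeff n (f * (PowerSeries.C d * PowerSeries.X ^ m))
      = if m ≤ n then PowerSeries.coeff (n - m) f * d else 0 := by
  rw [show f * (PowerSeries.C d * PowerSeries.X ^ m)
      = (f * PowerSeries.C d) * PowerSeries.X ^ m by ring,
    PowerSeries.coeff_mul_X_pow']
  split_ifs with h
  · rw [PowerSeries.coeff_mul_C]
  · rfl

private lemma coeff_lin (n : ℕ) (f g : PowerSeries ℂ) :
    PowerSeries.coeff n (3 * f - 2 * g)
      = 3 * PowerSeries.coeff n f - 2 * PowerSeries.coeff n g := by
  rw [show (3 : PowerSeries ℂ) = (PowerSeries.C 3 : PowerSeries ℂ) from (map_ofNat (PowerSeries.C (R := ℂ)) 3).symm,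
    show (2 : PowerSeries ℂ) = (PowerSeries.C 2 : PowerSeries ℂ) from (map_ofNat (PowerSeries.C (R := ℂ)) 2).symm,
    map_sub, PowerSeries.coeff_C_mul, PowerSeries.coeff_C_mul]

private lemma err_expand (μ : ℕ) (v v' : ℕ → PowerSeries ℂ) (j : ℕ) :
    Err μ v' j = Err μ v j
      + (PowerSeries.X : PowerSeries ℂ) ^ (2 * μ) * (v' (j + 1) - v (j + 1))
      - (PowerSeries.X : PowerSeries ℂ) ^ (2 * μ) * (v' 1 - v 1)
      - (3 * (v j) ^ 2 - 2 * (v j)) * (v' j - v j)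
      - (3 * (v j) - 1) * (v' j - v j) ^ 2
      - (v' j - v j) ^ 3 := by
  simp only [Err]; ring

private lemma combo_zero {v : PowerSeries ℂ} {b : ℂ} {qv : ℕ} (hv : HasLeadingTerm v b qv) :
    ∀ r < qv, PowerSeries.coeff r (3 * v ^ 2 - 2 * v) = 0 := by
  intro r hr
  rw [coeff_lin, hv.2.2 r hr]
  have h2 : PowerSeries.coeff r (v ^ 2) = 0 := by
    rw [sq]; exact coeff_mul_lowzero (r := qv) (s := qv) hv.2.2 hv.2.2 (by omega)
  rw [h2]; ring

private lemma combo_q {v : PowerSeries ℂ} {b : ℂ} {qv : ℕ} (hv : HasLeadingTerm v b qv)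
    (h1 : qv = 0 → b = 1) :
    PowerSeries.coeff qv (3 * v ^ 2 - 2 * v) = if qv = 0 then 1 else (-2) * b := by
  rw [coeff_lin, hv.2.1]
  by_cases h : qv = 0
  · rw [if_pos h]
    have h2 : PowerSeries.coeff qv (v ^ 2) = b * b := by
      subst h
      rw [sq]
      have h3 := coeff_mul_single (f := v) (g := v) (r := 0) (s := 0)
        (fun a ha => absurd ha (Nat.not_lt_zero a)) (fun a ha => absurd ha (Nat.not_lt_zero a))
      simpa [hv.2.1] using h3
    rw [h2, h1 h]; norm_num
  · rw [if_neg h]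
    have h2 : PowerSeries.coeff qv (v ^ 2) = 0 := by
      rw [sq]; exact coeff_mul_lowzero (r := qv) (s := qv) hv.2.2 hv.2.2 (by omega)
    rw [h2]; ring

private lemma uniq (p μ : ℕ) (β : ℕ → ℂ) (q : ℕ → ℕ)
    (hβ : ∀ j, 1 ≤ j → j < p → β j ≠ 0)
    (hβ1 : ∀ j, 1 ≤ j → j < p → q j = 0 → β j = 1)
    (hq2 : ∀ j, 1 ≤ j → j < p → q j < 2 * μ)
    (u u' : ℕ → PowerSeries ℂ) (hu : IsEscapeSolution p μ u) (hu' : IsEscapeSolution p μ u')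
    (hul : ∀ j, 1 ≤ j → j < p → HasLeadingTerm (u j) (β j) (q j))
    (hul' : ∀ j, 1 ≤ j → j < p → HasLeadingTerm (u' j) (β j) (q j)) :
    ∀ j, 1 ≤ j → j ≤ p → u' j = u j := by
  have hErr : ∀ j, 1 ≤ j → j < p → Err μ u j = 0 := fun j h1 h2 => by
    simp only [Err]; rw [hu.2 j h1 h2]; exact sub_self _
  have hErr' : ∀ j, 1 ≤ j → j < p → Err μ u' j = 0 := fun j h1 h2 => by
    simp only [Err]; rw [hu'.2 j h1 h2]; exact sub_self _
  have hlow : ∀ j, 1 ≤ j → j < p → ∀ a, a ≤ q j →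
      PowerSeries.coeff a (u' j - u j) = 0 := by
    intro j h1 h2 a ha
    rcases lt_or_eq_of_le ha with h | h
    · rw [map_sub, (hul' j h1 h2).2.2 a h, (hul j h1 h2).2.2 a h, sub_self]
    · subst h; rw [map_sub, (hul' j h1 h2).2.1, (hul j h1 h2).2.1, sub_self]
  have key : ∀ M j n, 1 ≤ j → j < p → n + q j = M →
      PowerSeries.coeff n (u' j - u j) = 0 := by
    intro M
    induction M using Nat.strong_induction_on with
    | _ M IH =>
    intro j n h1 h2 hM
    by_cases hn : n ≤ q j
    · exact hlow j h1 h2 n hn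
    have hIH : ∀ j' a, 1 ≤ j' → j' < p → a + q j' < M →
        PowerSeries.coeff a (u' j' - u j') = 0 :=
      fun j' a hj1 hj2 ha => IH (a + q j') ha j' a hj1 hj2 rfl
    have hexp := err_expand μ u u' j
    rw [hErr j h1 h2, hErr' j h1 h2] at hexp
    have hco := congrArg (PowerSeries.coeff M) hexp
    simp only [map_add, map_sub, map_zero] at hco
    have hA : PowerSeries.coeff M
        ((PowerSeries.X : PowerSeries ℂ) ^ (2 * μ) * (u' (j + 1) - u (j + 1))) = 0 := by
      by_cases hjp : j + 1 = p
      · rw [hjp, hu'.1, hu.1]; simp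
      · have hr1 : 1 ≤ j + 1 := by omega
        have hr2 : j + 1 < p := by omega
        rw [mul_comm, PowerSeries.coeff_mul_X_pow']
        split_ifs with h
        · exact hIH (j + 1) (M - 2 * μ) hr1 hr2 (by have := hq2 (j + 1) hr1 hr2; omega)
        · rfl
    have hB : PowerSeries.coeff M
        ((PowerSeries.X : PowerSeries ℂ) ^ (2 * μ) * (u' 1 - u 1)) = 0 := by
      have hr2 : 1 < p := by omega
      rw [mul_comm, PowerSeries.coeff_mul_X_pow']
      split_ifs with h
      · exact hIH 1 (M - 2 * μ) le_rfl hr2 (by have := hq2 1 le_rfl hr2; omega)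
      · rfl
    have hDsq : ∀ b, b < M + 1 → PowerSeries.coeff b ((u' j - u j) ^ 2) = 0 := by
      intro b hb
      rw [sq]
      exact coeff_mul_lowzero (r := q j + 1) (s := M - q j)
        (fun a ha => hlow j h1 h2 a (by omega))
        (fun c hc => hIH j c h1 h2 (by omega)) (by omega)
    have hD2 : PowerSeries.coeff M ((3 * u j - 1) * (u' j - u j) ^ 2) = 0 :=
      coeff_mul_lowzero (r := 0) (s := M + 1)
        (fun a ha => absurd ha (Nat.not_lt_zero a)) hDsq (by omega)
    have hD3 : PowerSeries.coeff M ((u' j - u j) ^ 3) = 0 := by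
      rw [pow_succ]
      exact coeff_mul_lowzero (r := M + 1) (s := 0) hDsq
        (fun b hb => absurd hb (Nat.not_lt_zero b)) (by omega)
    have hC : PowerSeries.coeff M ((3 * (u j) ^ 2 - 2 * (u j)) * (u' j - u j))
        = (if q j = 0 then 1 else (-2) * β j) * PowerSeries.coeff n (u' j - u j) := by
      rw [show M = q j + n by omega]
      rw [coeff_mul_single (r := q j) (s := n) (combo_zero (hul j h1 h2))
        (fun b hb => hIH j b h1 h2 (by omega))]
      rw [combo_q (hul j h1 h2) (hβ1 j h1 h2)]
    rw [hA, hB, hC, hD2, hD3] at hco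
    have hcst : (if q j = 0 then 1 else (-2) * β j) ≠ 0 := by
      split_ifs with h
      · exact one_ne_zero
      · exact mul_ne_zero (by norm_num) (hβ j h1 h2)
    have hx : (if q j = 0 then 1 else (-2) * β j) * PowerSeries.coeff n (u' j - u j) = 0 := by
      linear_combination hco
    rcases mul_eq_zero.mp hx with h | h
    · exact absurd h hcst
    · exact h
  intro j h1 hle
  rcases eq_or_lt_of_le hle with h | h
  · rw [h, hu'.1, hu.1]
  · have hz : u' j - u j = 0 := PowerSeries.ext fun n => by
      rw [key (n + q j) j n h1 h rfl]; simp
    exact sub_eq_zero.mp hz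


theorem existence_from_approximate (p μ : ℕ) (hp : 1 ≤ p) (hμ : 1 ≤ μ)
    (β : ℕ → ℂ) (q : ℕ → ℕ)
    (hβ : ∀ j, 1 ≤ j → j < p → β j ≠ 0)
    (hmono : ∀ j, 1 ≤ j → j < p → (β j = 1 ∧ q j = 0) ∨ μ ≤ q j)
    (hq2 : ∀ j, 1 ≤ j → j < p → q j < 2 * μ)
    (w : ℕ → PowerSeries ℂ) (hwp : w p = 0)
    (hwl : ∀ j, 1 ≤ j → j < p → HasLeadingTerm (w j) (β j) (q j))
    (Q : ℕ) (hQ : ∀ j, 1 ≤ j → j < p → 2 * q j < Q)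
    (hE : ∀ j, 1 ≤ j → j < p → ∀ n < Q, PowerSeries.coeff n (Err μ w j) = 0) :
    ∃ u : ℕ → PowerSeries ℂ,
      (IsEscapeSolution p μ u ∧
        ∀ j, 1 ≤ j → j < p → HasLeadingTerm (u j) (β j) (q j)) ∧
      ∀ u' : ℕ → PowerSeries ℂ,
        (IsEscapeSolution p μ u' ∧
          ∀ j, 1 ≤ j → j < p → HasLeadingTerm (u' j) (β j) (q j)) →
        ∀ j, 1 ≤ j → j ≤ p → u' j = u j := by
  classical
  have hβ1 : ∀ j, 1 ≤ j → j < p → q j = 0 → β j = 1 := by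
    intro j h1 h2 h0
    rcases hmono j h1 h2 with ⟨hb, _⟩ | h
    · exact hb
    · omega
  -- the successive approximations
  let W : ℕ → ℕ → PowerSeries ℂ := fun k => Nat.rec (motive := fun _ => ℕ → PowerSeries ℂ) w
    (fun k v j => if 1 ≤ j ∧ j < p then
      v j + PowerSeries.C (PowerSeries.coeff (Q + k) (Err μ v j)
          / (if q j = 0 then 1 else (-2) * β j)) * PowerSeries.X ^ (Q + k - q j)
      else v j) k
  have hWs : ∀ k j, W (k + 1) j = if 1 ≤ j ∧ j < p then
      W k j + PowerSeries.C (PowerSeries.coeff (Q + k) (Err μ (W k) j)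
          / (if q j = 0 then 1 else (-2) * β j)) * PowerSeries.X ^ (Q + k - q j)
      else W k j := fun _ _ => rfl
  have hWp : ∀ k, W k p = 0 := by
    intro k; induction k with
    | zero => exact hwp
    | succ k ih => rw [hWs k p, if_neg (by omega), ih]
  have hstep : ∀ k j n, n ≤ k → PowerSeries.coeff n (W (k + 1) j)
      = PowerSeries.coeff n (W k j) := by
    intro k j n hn
    by_cases hj : 1 ≤ j ∧ j < p
    · have hne : n ≠ Q + k - q j := by have := hQ j hj.1 hj.2; omega
      rw [hWs k j, if_pos hj, map_add, PowerSeries.coeff_C_mul, PowerSeries.coeff_X_pow,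
        if_neg hne, mul_zero, add_zero]
    · rw [hWs k j, if_neg hj]
  have hstab : ∀ j n k k', k ≤ k' → n ≤ k →
      PowerSeries.coeff n (W k' j) = PowerSeries.coeff n (W k j) := by
    intro j n k k' h hn
    induction h with
    | refl => rfl
    | @step m h ih =>
      have hnm : n ≤ m := le_trans hn h
      rw [hstep m j n hnm, ih]
  have hWlead : ∀ k j, 1 ≤ j → j < p → ∀ n, n + q j < Q →
      PowerSeries.coeff n (W k j) = PowerSeries.coeff n (w j) := by
    intro k; induction k with
    | zero => intro j h1 h2 n hn; rfl
    | succ k ih =>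
      intro j h1 h2 n hn
      have hne : n ≠ Q + k - q j := by have := hQ j h1 h2; omega
      rw [hWs k j, if_pos ⟨h1, h2⟩, map_add, PowerSeries.coeff_C_mul, PowerSeries.coeff_X_pow,
        if_neg hne, mul_zero, add_zero]
      exact ih j h1 h2 n hn
  have hWlt : ∀ k j, 1 ≤ j → j < p → HasLeadingTerm (W k j) (β j) (q j) := by
    intro k j h1 h2
    obtain ⟨hb, hqv, hl⟩ := hwl j h1 h2
    have hQj := hQ j h1 h2
    exact ⟨hb, by rw [hWlead k j h1 h2 (q j) (by omega)]; exact hqv,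
      fun n hn => by rw [hWlead k j h1 h2 n (by omega)]; exact hl n hn⟩
  have hWerr : ∀ k j, 1 ≤ j → j < p → ∀ n, n < Q + k →
      PowerSeries.coeff n (Err μ (W k) j) = 0 := by
    intro k; induction k with
    | zero => intro j h1 h2 n hn; exact hE j h1 h2 n (by omega)
    | succ k ih =>
      intro j h1 h2 n hn
      have hQj := hQ j h1 h2
      have hq2j := hq2 j h1 h2
      have hN : n ≤ Q + k := by omega
      have hδ : ∀ i, W (k + 1) i - W k i = if 1 ≤ i ∧ i < p then
          PowerSeries.C (PowerSeries.coeff (Q + k) (Err μ (W k) i)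
            / (if q i = 0 then 1 else (-2) * β i)) * PowerSeries.X ^ (Q + k - q i) else 0 := by
        intro i
        by_cases h : 1 ≤ i ∧ i < p
        · rw [hWs k i, if_pos h, if_pos h, add_sub_cancel_left]
        · rw [hWs k i, if_neg h, if_neg h, sub_self]
      rw [err_expand μ (W k) (W (k + 1)) j]
      simp only [map_add, map_sub]
      have hA : PowerSeries.coeff n
          ((PowerSeries.X : PowerSeries ℂ) ^ (2 * μ) * (W (k + 1) (j + 1) - W k (j + 1))) = 0 := by
        by_cases h : 1 ≤ j + 1 ∧ j + 1 < p
        · have hne : n ≠ 2 * μ + (Q + k - q (j + 1)) := by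
            have := hq2 (j + 1) h.1 h.2; have := hQ (j + 1) h.1 h.2; omega
          rw [hδ (j + 1), if_pos h, mul_left_comm, ← pow_add, PowerSeries.coeff_C_mul,
            PowerSeries.coeff_X_pow, if_neg hne, mul_zero]
        · rw [hδ (j + 1), if_neg h, mul_zero, map_zero]
      have hB : PowerSeries.coeff n
          ((PowerSeries.X : PowerSeries ℂ) ^ (2 * μ) * (W (k + 1) 1 - W k 1)) = 0 := by
        have hr : (1 : ℕ) ≤ 1 ∧ 1 < p := ⟨le_rfl, by omega⟩
        have hne : n ≠ 2 * μ + (Q + k - q 1) := by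
          have := hq2 1 hr.1 hr.2; have := hQ 1 hr.1 hr.2; omega
        rw [hδ 1, if_pos hr, mul_left_comm, ← pow_add, PowerSeries.coeff_C_mul,
          PowerSeries.coeff_X_pow, if_neg hne, mul_zero]
      have hD2 : PowerSeries.coeff n
          ((3 * (W k j) - 1) * (W (k + 1) j - W k j) ^ 2) = 0 := by
        have hne : ¬((Q + k - q j) * 2 ≤ n) := by omega
        rw [hδ j, if_pos ⟨h1, h2⟩, mul_pow, ← map_pow, ← pow_mul, coeff_f_mul_CX, if_neg hne]
      have hD3 : PowerSeries.coeff n ((W (k + 1) j - W k j) ^ 3) = 0 := by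
        have hne : n ≠ (Q + k - q j) * 3 := by omega
        rw [hδ j, if_pos ⟨h1, h2⟩, mul_pow, ← map_pow, ← pow_mul, PowerSeries.coeff_C_mul,
          PowerSeries.coeff_X_pow, if_neg hne, mul_zero]
      by_cases hcase : n = Q + k
      · subst hcase
        have hC : PowerSeries.coeff (Q + k)
            ((3 * (W k j) ^ 2 - 2 * (W k j)) * (W (k + 1) j - W k j))
            = PowerSeries.coeff (Q + k) (Err μ (W k) j) := by
          have hle : Q + k - q j ≤ Q + k := by omega
          rw [hδ j, if_pos ⟨h1, h2⟩, coeff_f_mul_CX, if_pos hle,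
            show Q + k - (Q + k - q j) = q j by omega,
            combo_q (hWlt k j h1 h2) (hβ1 j h1 h2)]
          have hcst : (if q j = 0 then 1 else (-2) * β j) ≠ 0 := by
            split_ifs with h
            · exact one_ne_zero
            · exact mul_ne_zero (by norm_num) (hβ j h1 h2)
          rw [mul_comm, div_mul_cancel₀ _ hcst]
        rw [hA, hB, hC, hD2, hD3]
        ring
      · have hn' : n < Q + k := by omega
        have hC : PowerSeries.coeff n
            ((3 * (W k j) ^ 2 - 2 * (W k j)) * (W (k + 1) j - W k j)) = 0 := by
          rw [hδ j, if_pos ⟨h1, h2⟩, coeff_f_mul_CX]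
          by_cases hle : Q + k - q j ≤ n
          · rw [if_pos hle, combo_zero (hWlt k j h1 h2) _ (by omega), zero_mul]
          · rw [if_neg hle]
        rw [ih j h1 h2 n hn', hA, hB, hC, hD2, hD3]
        ring
  -- the limit
  let u : ℕ → PowerSeries ℂ := fun j => PowerSeries.mk fun n => PowerSeries.coeff n (W n j)
  have hu_coeff : ∀ j n, PowerSeries.coeff n (u j) = PowerSeries.coeff n (W n j) :=
    fun j n => PowerSeries.coeff_mk n _
  have hu_stab : ∀ j n k, n ≤ k →
      PowerSeries.coeff n (u j) = PowerSeries.coeff n (W k j) := fun j n k h => by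
    rw [hu_coeff j n]; exact (hstab j n n k h le_rfl).symm
  have hup : u p = 0 := PowerSeries.ext fun n => by rw [hu_coeff p n, hWp n]
  have hulead : ∀ j, 1 ≤ j → j < p → HasLeadingTerm (u j) (β j) (q j) := by
    intro j h1 h2
    obtain ⟨hb, hqv, hl⟩ := hwl j h1 h2
    have hQj := hQ j h1 h2
    refine ⟨hb, ?_, fun n hn => ?_⟩
    · rw [hu_coeff j (q j), hWlead (q j) j h1 h2 (q j) (by omega)]; exact hqv
    · rw [hu_coeff j n, hWlead n j h1 h2 n (by omega)]; exact hl n hn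
  have huerr : ∀ j, 1 ≤ j → j < p → Err μ u j = 0 := by
    intro j h1 h2
    have hQj := hQ j h1 h2
    apply PowerSeries.ext; intro N
    have hδ : ∀ i b, b ≤ N → PowerSeries.coeff b (u i - W N i) = 0 := fun i b hb => by
      rw [map_sub, hu_stab i b N hb, sub_self]
    rw [err_expand μ (W N) u j]
    simp only [map_add, map_sub, map_zero]
    have hsq : ∀ b, b < N + 1 → PowerSeries.coeff b ((u j - W N j) ^ 2) = 0 := fun b hb => by
      rw [sq]
      exact coeff_mul_lowzero (r := N + 1) (s := 0) (fun a ha => hδ j a (by omega))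
        (fun c hc => absurd hc (Nat.not_lt_zero c)) (by omega)
    have hA : PowerSeries.coeff N
        ((PowerSeries.X : PowerSeries ℂ) ^ (2 * μ) * (u (j + 1) - W N (j + 1))) = 0 :=
      coeff_mul_lowzero (r := 0) (s := N + 1) (fun a ha => absurd ha (Nat.not_lt_zero a))
        (fun b hb => hδ (j + 1) b (by omega)) (by omega)
    have hB : PowerSeries.coeff N
        ((PowerSeries.X : PowerSeries ℂ) ^ (2 * μ) * (u 1 - W N 1)) = 0 :=
      coeff_mul_lowzero (r := 0) (s := N + 1) (fun a ha => absurd ha (Nat.not_lt_zero a))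
        (fun b hb => hδ 1 b (by omega)) (by omega)
    have hC : PowerSeries.coeff N
        ((3 * (W N j) ^ 2 - 2 * (W N j)) * (u j - W N j)) = 0 :=
      coeff_mul_lowzero (r := 0) (s := N + 1) (fun a ha => absurd ha (Nat.not_lt_zero a))
        (fun b hb => hδ j b (by omega)) (by omega)
    have hD2 : PowerSeries.coeff N ((3 * (W N j) - 1) * (u j - W N j) ^ 2) = 0 :=
      coeff_mul_lowzero (r := 0) (s := N + 1) (fun a ha => absurd ha (Nat.not_lt_zero a))
        hsq (by omega)
    have hD3 : PowerSeries.coeff N ((u j - W N j) ^ 3) = 0 := by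
      rw [pow_succ]
      exact coeff_mul_lowzero (r := N + 1) (s := 0) hsq
        (fun b hb => absurd hb (Nat.not_lt_zero b)) (by omega)
    rw [hA, hB, hC, hD2, hD3, hWerr N j h1 h2 N (by omega)]
    simp
  have heq : IsEscapeSolution p μ u :=
    ⟨hup, fun j h1 h2 => by
      have h := huerr j h1 h2
      simp only [Err] at h
      exact sub_eq_zero.mp h⟩
  refine ⟨u, ⟨heq, hulead⟩, ?_⟩
  rintro u' ⟨hu'sol, hu'lead⟩ j h1 h2
  exact uniq p μ β q hβ hβ1 hq2 u u' heq hu'sol hulead hu'lead j h1 h2
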